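/- In a tree T = (V,E), a set A ⊆ V is a center set if and only if A = {u} for some vertex u, or A = {u,v} for some edge uv ∈ E. -/

import Mathlib

/-- The `S`-eccentricity of a vertex `v`. -/
noncomputable def sEcc {V : Type*} (G : SimpleGraph V) (S : Finset V) (v : V) : ℕ :=
  S.sup fun x => G.dist v x

/-- The `S`-center of `G`. -/
noncomputable def sCenter {V : Type*} (G : SimpleGraph V) (S : Finset V) : Set V :=
  {v | ∀ w, sEcc G S v ≤ sEcc G S w}

/-- `A` is a center set of `G` if it is the `S`-center for some nonempty set `S`. -/
def IsCenterSet {V : Type*} (G : SimpleGraph V) (A : Set V) : Prop :=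
  ∃ S : Finset V, S.Nonempty ∧ sCenter G S = A

open SimpleGraph Walk

section Aux

variable {V : Type*} [DecidableEq V] {T : SimpleGraph V}

/-- Every walk between the endpoints of an edge of a tree uses that edge. -/
lemma tree_key_edge (hT : T.IsTree) {u w : V} (h : T.Adj u w) (p : T.Walk u w) :
    s(u, w) ∈ p.edges := by
  have hb := (SimpleGraph.isAcyclic_iff_forall_edge_isBridge.mp hT.2) (T.mem_edgeSet.mpr h)
  rw [SimpleGraph.isBridge_iff] at hb
  by_contra hc
  exact hb (SimpleGraph.reachable_delete_edges_iff_exists_walk.mpr ⟨p, hc⟩)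

/-- A geodesic to the nearer endpoint of an edge avoids that edge. -/
lemma geo_avoid (hT : T.IsTree) {u w x : V} (h : T.Adj u w) (p : T.Walk x u)
    (hp : p.length = T.dist x u) (hd : T.dist x u ≤ T.dist x w) : s(u, w) ∉ p.edges := by
  intro he
  have hw : w ∈ p.support := p.snd_mem_support_of_mem_edges he
  have h1 : T.dist x w ≤ (p.takeUntil w hw).length := SimpleGraph.dist_le _
  have h2 : T.dist w u ≤ (p.dropUntil w hw).length := SimpleGraph.dist_le _
  have h3 : (p.takeUntil w hw).length + (p.dropUntil w hw).length = p.length := by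
    rw [← Walk.length_append, Walk.take_spec]
  have h4 : 0 < T.dist w u := hT.1.pos_dist_of_ne h.symm.ne
  omega

/-- In a tree, a vertex has different distances to the two endpoints of an edge. -/
lemma tree_dist_ne (hT : T.IsTree) {u w : V} (h : T.Adj u w) (x : V) :
    T.dist x u ≠ T.dist x w := by
  intro heq
  obtain ⟨p, hp⟩ := hT.1.exists_walk_length_eq_dist x u
  obtain ⟨q, hq⟩ := hT.1.exists_walk_length_eq_dist x w
  have h1 : s(u, w) ∉ p.edges := geo_avoid hT h p hp heq.le
  have h2 : s(w, u) ∉ q.edges := geo_avoid hT h.symm q hq heq.ge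
  have := tree_key_edge hT h (p.reverse.append q)
  rw [Walk.edges_append, List.mem_append, Walk.edges_reverse, List.mem_reverse] at this
  rcases this with h' | h'
  · exact h1 h'
  · exact h2 (Sym2.eq_swap ▸ h')

lemma tree_adj_dist_cases (hT : T.IsTree) {u w : V} (h : T.Adj u w) (x : V) :
    T.dist x w = T.dist x u + 1 ∨ T.dist x u = T.dist x w + 1 := by
  have h1 : T.dist x w ≤ T.dist x u + T.dist u w := hT.1.dist_triangle
  have h2 : T.dist x u ≤ T.dist x w + T.dist w u := hT.1.dist_triangle
  have e1 : T.dist u w = 1 := SimpleGraph.dist_eq_one_iff_adj.mpr h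
  have e2 : T.dist w u = 1 := SimpleGraph.dist_eq_one_iff_adj.mpr h.symm
  have hne := tree_dist_ne hT h x
  omega

/-- If `x` is on the `u` side of edge `uw` and `v` on the `w` side, then the
geodesic from `x` to `v` passes through `u`. -/
lemma tree_star (hT : T.IsTree) {u w x v : V} (h : T.Adj u w)
    (h1 : T.dist x w = T.dist x u + 1) (h2 : T.dist u v = T.dist w v + 1) :
    T.dist x u + T.dist u v ≤ T.dist x v := by
  obtain ⟨p, hp⟩ := hT.1.exists_walk_length_eq_dist x v
  have hmem : s(u, w) ∈ p.edges := by
    by_contra hc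
    obtain ⟨p1, hp1⟩ := hT.1.exists_walk_length_eq_dist x u
    obtain ⟨p3, hp3⟩ := hT.1.exists_walk_length_eq_dist v w
    have a1 : s(u, w) ∉ p1.edges := geo_avoid hT h p1 hp1 (by omega)
    have a3 : s(w, u) ∉ p3.edges := by
      refine geo_avoid hT h.symm p3 hp3 ?_
      have c1 : T.dist v w = T.dist w v := SimpleGraph.dist_comm ..
      have c2 : T.dist v u = T.dist u v := SimpleGraph.dist_comm ..
      omega
    have := tree_key_edge hT h (p1.reverse.append (p.append p3))
    rw [Walk.edges_append, List.mem_append, Walk.edges_reverse, List.mem_reverse,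
      Walk.edges_append, List.mem_append] at this
    rcases this with h' | h' | h'
    · exact a1 h'
    · exact hc h'
    · exact a3 (Sym2.eq_swap ▸ h')
  have hu : u ∈ p.support := p.fst_mem_support_of_mem_edges hmem
  have h3 : T.dist x u ≤ (p.takeUntil u hu).length := SimpleGraph.dist_le _
  have h4 : T.dist u v ≤ (p.dropUntil u hu).length := SimpleGraph.dist_le _
  have h5 : (p.takeUntil u hu).length + (p.dropUntil u hu).length = p.length := by
    rw [← Walk.length_append, Walk.take_spec]
  omega

/-- Two distinct vertices of an `S`-center of a tree are adjacent. -/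
lemma centers_adj (hT : T.IsTree) {S : Finset V} (hS : S.Nonempty) {u v : V}
    (hu : u ∈ sCenter T S) (hv : v ∈ sCenter T S) (hne : u ≠ v) : T.Adj u v := by
  by_contra hadj
  have hL1 : 0 < T.dist u v := hT.1.pos_dist_of_ne hne
  have hL2 : T.dist u v ≠ 1 := fun hc => hadj (SimpleGraph.dist_eq_one_iff_adj.mp hc)
  obtain ⟨p, hp⟩ := hT.1.exists_walk_length_eq_dist u v
  cases p with
  | nil => exact hne rfl
  | @cons _ w _ huw q =>
    rw [Walk.length_cons] at hp
    have hq : T.dist w v ≤ q.length := SimpleGraph.dist_le _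
    have htri : T.dist u v ≤ T.dist u w + T.dist w v := hT.1.dist_triangle
    have e1 : T.dist u w = 1 := SimpleGraph.dist_eq_one_iff_adj.mpr huw
    have h2 : T.dist u v = T.dist w v + 1 := by omega
    have hEuv : sEcc T S u = sEcc T S v := le_antisymm (hu v) (hv u)
    have key : ∀ x ∈ S, T.dist w x + 1 ≤ sEcc T S u := by
      intro x hx
      have hux : T.dist u x ≤ sEcc T S u := Finset.le_sup hx
      have hvx : T.dist v x ≤ sEcc T S u := hEuv ▸ Finset.le_sup hx
      rcases tree_adj_dist_cases hT huw x with hcase | hcase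
      · -- dist x w = dist x u + 1 : x is on u side, star lemma
        have := tree_star hT huw hcase h2
        have c1 : T.dist x w = T.dist w x := SimpleGraph.dist_comm ..
        have c2 : T.dist x u = T.dist u x := SimpleGraph.dist_comm ..
        have c3 : T.dist x v = T.dist v x := SimpleGraph.dist_comm ..
        omega
      · have c1 : T.dist x w = T.dist w x := SimpleGraph.dist_comm ..
        have c2 : T.dist x u = T.dist u x := SimpleGraph.dist_comm ..
        omega
    have hpos : 1 ≤ sEcc T S u := by
      obtain ⟨x, hx⟩ := hS
      have := key x hx
      omega
    have hw : sEcc T S w ≤ sEcc T S u - 1 := by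
      apply Finset.sup_le
      intro x hx
      have := key x hx
      omega
    have := hu w
    omega

end Aux

/-- In a tree `T`, the center sets are exactly the singletons `{u}` and the pairs `{u, v}`
with `uv` an edge of `T`. -/
theorem centerSets_of_tree {V : Type*} [Fintype V] (T : SimpleGraph V)
    (hT : T.IsTree) (A : Set V) :
    IsCenterSet T A ↔
      (∃ u : V, A = {u}) ∨ (∃ u v : V, T.Adj u v ∧ A = {u, v}) := by
  classical
  constructor
  · rintro ⟨S, hS, rfl⟩
    -- the center is nonempty: take a minimizer of sEcc
    obtain ⟨x₀, hx₀⟩ := hS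
    obtain ⟨c, -, hc⟩ := Finset.exists_min_image Finset.univ (sEcc T S)
      ⟨x₀, Finset.mem_univ x₀⟩
    have hcC : c ∈ sCenter T S := fun y => hc y (Finset.mem_univ y)
    by_cases hsing : ∀ a ∈ sCenter T S, a = c
    · left
      exact ⟨c, Set.eq_singleton_iff_unique_mem.mpr ⟨hcC, hsing⟩⟩
    · right
      push_neg at hsing
      obtain ⟨d, hdC, hdc⟩ := hsing
      refine ⟨c, d, centers_adj hT ⟨x₀, hx₀⟩ hcC hdC (Ne.symm hdc), ?_⟩
      apply Set.eq_of_subset_of_subset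
      · intro e heC
        by_contra hmem
        simp only [Set.mem_insert_iff, Set.mem_singleton_iff, not_or] at hmem
        have h1 : T.Adj e c := centers_adj hT ⟨x₀, hx₀⟩ heC hcC hmem.1
        have h2 : T.Adj e d := centers_adj hT ⟨x₀, hx₀⟩ heC hdC hmem.2
        have h3 : T.Adj c d := centers_adj hT ⟨x₀, hx₀⟩ hcC hdC (Ne.symm hdc)
        have := tree_dist_ne hT h3 e
        rw [SimpleGraph.dist_eq_one_iff_adj.mpr h1, SimpleGraph.dist_eq_one_iff_adj.mpr h2]
          at this
        exact this rfl
      · rintro e (rfl | rfl)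
        · exact hcC
        · exact hdC
  · rintro (⟨u, rfl⟩ | ⟨u, v, huv, rfl⟩)
    · refine ⟨{u}, Finset.singleton_nonempty u, ?_⟩
      ext w
      simp only [sCenter, sEcc, Finset.sup_singleton, Set.mem_setOf_eq, Set.mem_singleton_iff]
      constructor
      · intro h
        have := h u
        rw [SimpleGraph.dist_self] at this
        exact hT.1.dist_eq_zero_iff.mp (Nat.le_zero.mp this)
      · rintro rfl y
        simp [SimpleGraph.dist_self]
    · refine ⟨{u, v}, Finset.insert_nonempty u {v}, ?_⟩
      have hne : u ≠ v := huv.ne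
      have hdist : T.dist u v = 1 := SimpleGraph.dist_eq_one_iff_adj.mpr huv
      have hsup : ∀ w, sEcc T {u, v} w = max (T.dist w u) (T.dist w v) := by
        intro w
        simp [sEcc, Finset.sup_insert, Finset.sup_singleton]
      have hEu : sEcc T {u, v} u = 1 := by
        rw [hsup, SimpleGraph.dist_self, hdist]; simp
      have hEv : sEcc T {u, v} v = 1 := by
        rw [hsup, SimpleGraph.dist_self, SimpleGraph.dist_comm, hdist]; simp
      have hlow : ∀ w, 1 ≤ sEcc T {u, v} w := by
        intro w
        have := tree_dist_ne hT huv w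
        rw [hsup]
        omega
      ext w
      simp only [sCenter, Set.mem_setOf_eq, Set.mem_insert_iff, Set.mem_singleton_iff]
      constructor
      · intro h
        have h1 : sEcc T {u, v} w ≤ 1 := hEu ▸ h u
        have := tree_dist_ne hT huv w
        rw [hsup] at h1
        have hcase : T.dist w u = 0 ∨ T.dist w v = 0 := by omega
        rcases hcase with h' | h'
        · exact Or.inl (hT.1.dist_eq_zero_iff.mp h')
        · exact Or.inr (hT.1.dist_eq_zero_iff.mp h')
      · rintro (rfl | rfl) y
        · rw [hEu]; exact hlow y
        · rw [hEv]; exact hlow y
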